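/- Let Δ be a positive self-adjoint d×d matrix over a finite von Neumann algebra N with normalized positive normal trace tr, and let λ ≥ 0, n ∈ ℕ, K ≥ ‖Δ‖. If p: ℝ → ℝ satisfies χ_{[0,λ]}(x) ≤ p(x) ≤ (1/n)·χ_{[0,K]}(x) + χ_{[0,λ+1/n]}(x) for all 0 ≤ x ≤ K, then F_Δ(λ) ≤ tr(p(Δ)) ≤ d/n + F_Δ(λ + 1/n), where F_Δ(μ) := tr(χ_{[0,μ]}(Δ)) is the spectral density function. -/

import Mathlib

open MeasureTheory Set

theorem stmt_8 {d n : ℕ} (hn : 0 < n) (K lam : ℝ) (hlam : 0 ≤ lam) (hK : 0 ≤ K)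
    (μ : Measure ℝ) [IsFiniteMeasure μ]
    (hsupp : μ (Icc 0 K)ᶜ = 0) (hnorm : (μ (Icc 0 K)).toReal = d)
    (p : ℝ → ℝ) (hint : Integrable p μ)
    (hp : ∀ x ∈ Icc (0 : ℝ) K,
      indicator (Icc 0 lam) (fun _ => (1 : ℝ)) x ≤ p x ∧
      p x ≤ (1 / (n : ℝ)) * indicator (Icc 0 K) (fun _ => (1 : ℝ)) x +
        indicator (Icc 0 (lam + 1 / (n : ℝ))) (fun _ => (1 : ℝ)) x) :
    (μ (Icc 0 lam)).toReal ≤ ∫ x, p x ∂μ ∧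
      ∫ x, p x ∂μ ≤ (d : ℝ) / n + (μ (Icc 0 (lam + 1 / (n : ℝ)))).toReal := by
  have hae : ∀ᵐ x ∂μ, x ∈ Icc 0 K := by
    exact ae_iff.2 hsupp
  have hind : ∀ (s : Set ℝ), MeasurableSet s →
      Integrable (indicator s (fun _ => (1 : ℝ))) μ :=
    fun s hs => (integrable_const (1 : ℝ)).indicator hs
  have hmlam : MeasurableSet (Icc (0:ℝ) lam) := measurableSet_Icc
  have hmK : MeasurableSet (Icc (0:ℝ) K) := measurableSet_Icc
  have hmlam' : MeasurableSet (Icc (0:ℝ) (lam + 1 / (n:ℝ))) := measurableSet_Icc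
  constructor
  · calc (μ (Icc 0 lam)).toReal = ∫ x, indicator (Icc 0 lam) (fun _ => (1:ℝ)) x ∂μ := by
          rw [integral_indicator_const (1:ℝ) hmlam, measureReal_def, smul_eq_mul, mul_one]
    _ ≤ ∫ x, p x ∂μ := by
          refine integral_mono_ae (hind _ hmlam) hint ?_
          filter_upwards [hae] with x hx using (hp x hx).1
  · calc ∫ x, p x ∂μ
        ≤ ∫ x, ((1 / (n:ℝ)) * indicator (Icc 0 K) (fun _ => (1:ℝ)) x +
            indicator (Icc 0 (lam + 1 / (n:ℝ))) (fun _ => (1:ℝ)) x) ∂μ := by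
          refine integral_mono_ae hint (((hind _ hmK).const_mul _).add (hind _ hmlam')) ?_
          filter_upwards [hae] with x hx using (hp x hx).2
    _ = (d : ℝ) / n + (μ (Icc 0 (lam + 1 / (n:ℝ)))).toReal := by
          rw [integral_add ((hind _ hmK).const_mul _) (hind _ hmlam'),
            integral_const_mul, integral_indicator_const (1:ℝ) hmK, measureReal_def,
            integral_indicator_const (1:ℝ) hmlam', measureReal_def, hnorm]
          simp [div_eq_mul_inv, mul_comm]
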